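/- Let Ω ⊆ ℝ^{2n} be open, h ≠ 0 a real number, and φ : Ω → ℝ^{2n} a differentiable map. If there exists a C² function Ĥ : Ω → ℝ such that J⁻¹∇Ĥ(y) = (φ(y) − y)/h for all y ∈ Ω (i.e. the forward-Euler training loss of a Hamiltonian Neural Network vanishes identically on Ω), then the Jacobian of φ satisfies J·Dφ(y) + Dφ(y)ᵀ·J = 2J for every y ∈ Ω. -/

import Mathlib

open Matrix

noncomputable section

/-- Phase space ℝ^{2n}, with coordinates indexed by `Fin n ⊕ Fin n`
(`Sum.inl` = momentum coordinates `p`, `Sum.inr` = position coordinates `q`). -/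
abbrev Phase (n : ℕ) := EuclideanSpace ℝ (Fin n ⊕ Fin n)

def toPhase {n : ℕ} (v : (Fin n ⊕ Fin n) → ℝ) : Phase n := WithLp.toLp 2 v

def ofPhase {n : ℕ} (y : Phase n) : (Fin n ⊕ Fin n) → ℝ := y

/-- The canonical symplectic matrix `J = [[0, I], [-I, 0]]`. -/
def J (n : ℕ) : Matrix (Fin n ⊕ Fin n) (Fin n ⊕ Fin n) ℝ :=
  Matrix.fromBlocks 0 1 (-1) 0

/-- The symplectic gradient (Hamiltonian vector field) `J⁻¹ ∇H`. -/
def sympGrad {n : ℕ} (H : Phase n → ℝ) (y : Phase n) : Phase n :=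
  toPhase ((J n)⁻¹.mulVec (ofPhase (gradient H y)))

/-- The Jacobian matrix of a map on phase space. -/
def jacMatrix {n : ℕ} (f : Phase n → Phase n) (y : Phase n) :
    Matrix (Fin n ⊕ Fin n) (Fin n ⊕ Fin n) ℝ :=
  Matrix.of fun i j => ofPhase (fderiv ℝ f y (EuclideanSpace.single j 1)) i

/-- If the forward-Euler HNN loss vanishes identically on an open set `Ω`,
i.e. `J⁻¹∇Ĥ(y) = (φ(y) − y)/h` on `Ω` for some C² function `Ĥ`, then the Jacobian of `φ`
satisfies `J·Dφ(y) + Dφ(y)ᵀ·J = 2J` on `Ω`. -/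
lemma J_mul_J (n : ℕ) : _root_.J n * _root_.J n = -1 := by
  simp [_root_.J, Matrix.fromBlocks_multiply]
  ext (i|i) (j|j) <;> simp [Matrix.fromBlocks, Matrix.one_apply, Sum.elim_inl, Sum.elim_inr]

lemma J_inv (n : ℕ) : (_root_.J n)⁻¹ = -(_root_.J n) := by
  apply Matrix.inv_eq_right_inv
  rw [Matrix.mul_neg, J_mul_J]; simp

lemma J_transpose (n : ℕ) : (_root_.J n)ᵀ = -(_root_.J n) := by
  simp [_root_.J, Matrix.fromBlocks_transpose, Matrix.fromBlocks_neg]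

/-- `mulVec` by a fixed matrix, as a continuous linear map on phase space. -/
def mulVecCLM {n : ℕ} (M : Matrix (Fin n ⊕ Fin n) (Fin n ⊕ Fin n) ℝ) :
    Phase n →L[ℝ] Phase n :=
  LinearMap.toContinuousLinearMap
    { toFun := fun v => toPhase (M.mulVec (ofPhase v))
      map_add' := fun a b => by
        show toPhase (M.mulVec (ofPhase a + ofPhase b)) = _
        rw [Matrix.mulVec_add]; rfl
      map_smul' := fun c a => by
        show toPhase (M.mulVec (c • ofPhase a)) = _
        rw [Matrix.mulVec_smul]; rfl }

lemma mulVecCLM_apply {n : ℕ} (M : Matrix (Fin n ⊕ Fin n) (Fin n ⊕ Fin n) ℝ)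
    (v : Phase n) : mulVecCLM M v = toPhase (M.mulVec (ofPhase v)) := rfl

theorem stmt1 (n : ℕ) (Ω : Set (Phase n)) (hΩ : IsOpen Ω) (h : ℝ) (hh : h ≠ 0)
    (φ : Phase n → Phase n) (hφ : ∀ y ∈ Ω, DifferentiableAt ℝ φ y)
    (H : Phase n → ℝ) (hH : ContDiffOn ℝ 2 H Ω)
    (hloss : ∀ y ∈ Ω, sympGrad H y = h⁻¹ • (φ y - y)) :
    ∀ y ∈ Ω, J n * jacMatrix φ y + (jacMatrix φ y)ᵀ * J n = (2 : ℝ) • J n := by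
  intro y hy
  have hmem : Ω ∈ nhds y := hΩ.mem_nhds hy
  have hH2 : ContDiffAt ℝ 2 H y := hH.contDiffAt hmem
  set f'' := fderiv ℝ (fderiv ℝ H) y with hf''def
  have hsymm : ∀ v w, f'' v w = f'' w v := hH2.isSymmSndFDerivAt (by simp [minSmoothness_of_isRCLikeNormedField])
  have hd1 : DifferentiableAt ℝ (fderiv ℝ H) y := by
    have : ContDiffAt ℝ 1 (fderiv ℝ H) y := hH2.fderiv_right (by norm_num)
    exact this.differentiableAt one_ne_zero
  set S : StrongDual ℝ (Phase n) →L[ℝ] Phase n :=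
    ((InnerProductSpace.toDual ℝ (Phase n)).symm.toContinuousLinearEquiv :
      StrongDual ℝ (Phase n) ≃L[ℝ] Phase n).toContinuousLinearMap with hSdef
  have hGrad : HasFDerivAt (gradient H) (S.comp f'') y := by
    have h1 : HasFDerivAt (fderiv ℝ H) f'' y := hd1.hasFDerivAt
    have h2 := S.hasFDerivAt.comp y h1
    exact h2
  set A : Phase n →L[ℝ] Phase n := mulVecCLM ((_root_.J n)⁻¹) with hAdef
  set Dg : Phase n →L[ℝ] Phase n :=
    ContinuousLinearMap.id ℝ (Phase n) + h • (A.comp (S.comp f'')) with hDgdef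
  have hg : HasFDerivAt (fun z => z + h • sympGrad H z) Dg y := by
    have h3 : HasFDerivAt (fun z => sympGrad H z) (A.comp (S.comp f'')) y := by
      have := A.hasFDerivAt.comp y hGrad
      exact this
    exact (hasFDerivAt_id y).add (h3.const_smul h)
  have heq : φ =ᶠ[nhds y] (fun z => z + h • sympGrad H z) := by
    filter_upwards [hmem] with z hz
    have := hloss z hz
    have h4 : h • sympGrad H z = φ z - z := by
      rw [this, smul_smul, mul_inv_cancel₀ hh, one_smul]
    rw [h4]; abel
  have hDφ : fderiv ℝ φ y = Dg := by rw [heq.fderiv_eq, hg.fderiv]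
  -- the Hessian matrix
  set Hmat : Matrix (Fin n ⊕ Fin n) (Fin n ⊕ Fin n) ℝ :=
    Matrix.of (fun i j => f'' (EuclideanSpace.single j 1) (EuclideanSpace.single i 1))
    with hHmatdef
  have hHsymm : Hmatᵀ = Hmat := by
    ext i j
    simp [hHmatdef, Matrix.transpose_apply, hsymm]
  have hjac : jacMatrix φ y = 1 + h • ((_root_.J n)⁻¹ * Hmat) := by
    ext i j
    have hS : ∀ (L : StrongDual ℝ (Phase n)) (k : Fin n ⊕ Fin n),
        (S L) k = L (EuclideanSpace.single k 1) := by
      intro L k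
      have h5 : (S L) k = inner (𝕜 := ℝ) (S L) (EuclideanSpace.single k 1) := by
        rw [EuclideanSpace.inner_single_right]; simp
      rw [h5]
      exact InnerProductSpace.toDual_symm_apply
    simp only [jacMatrix, Matrix.of_apply, hDφ, hDgdef, ContinuousLinearMap.add_apply,
      ContinuousLinearMap.coe_id', id_eq, ContinuousLinearMap.coe_smul',
      Pi.smul_apply, ContinuousLinearMap.coe_comp', Function.comp_apply]
    have h6 : ofPhase (EuclideanSpace.single j 1 + h • A (S (f'' (EuclideanSpace.single j 1)))) i
        = (EuclideanSpace.single j (1:ℝ)) i + h * (A (S (f'' (EuclideanSpace.single j 1)))) i := rfl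
    rw [h6]
    have h7 : (A (S (f'' (EuclideanSpace.single j 1)))) i
        = ((_root_.J n)⁻¹ * Hmat) i j := by
      rw [hAdef, mulVecCLM_apply]
      show ((_root_.J n)⁻¹.mulVec (ofPhase (S (f'' (EuclideanSpace.single j 1))))) i = _
      rw [Matrix.mul_apply]
      simp only [Matrix.mulVec, dotProduct]
      congr 1
      ext k
      congr 1
      exact hS _ k
    rw [h7]
    simp [Matrix.add_apply, Matrix.smul_apply, Matrix.one_apply, EuclideanSpace.single_apply,
      eq_comm, smul_eq_mul]
  -- final algebra
  rw [hjac]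
  rw [_root_.J_inv n]
  have hJJ := J_mul_J n
  have hJT := J_transpose n
  set K := _root_.J n
  rw [Matrix.transpose_add, Matrix.transpose_one, Matrix.transpose_smul,
    Matrix.transpose_mul, hHsymm, Matrix.transpose_neg, hJT]
  simp only [neg_neg, Matrix.mul_add, Matrix.add_mul, Matrix.mul_one, Matrix.one_mul,
    Matrix.mul_smul, Matrix.smul_mul, Matrix.neg_mul, Matrix.mul_neg]
  rw [← Matrix.mul_assoc K K Hmat, hJJ, Matrix.mul_assoc Hmat K K, hJJ]
  simp only [Matrix.neg_mul, Matrix.mul_neg, neg_neg, Matrix.one_mul, Matrix.mul_one]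
  module
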